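/- Under the stability condition λn < 1−ε (with 0 < λ < 1, 0 < ε < 1, n ≥ 1), the PGF of the steady-state delay D (in frames) of the frame-synchronous bulk-arrival queue equals G_D(s) = (1 − λn/(1−ε)) · (1−s)·((1−λ)^n (1−εs)^n − (1−λ+(λ−ε)s)^n) / ((1−(1−λ)^n)·(s(1−εs)^n − (1−λ+(λ−ε)s)^n)). -/

import Mathlib

/-- PGF of the indicator of at least one arrival in a frame of `n` channel uses. -/
noncomputable def GI (lam : ℝ) (n : ℕ) (s : ℝ) : ℝ :=
  (1 - lam) ^ n + s * (1 - (1 - lam) ^ n)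

/-- Inverse of `GI`. -/
noncomputable def GIinv (lam : ℝ) (n : ℕ) (s : ℝ) : ℝ :=
  (s - (1 - lam) ^ n) / (1 - (1 - lam) ^ n)

/-- PGF of a geometric service time on {1,2,...} with parameter `1-ε`. -/
noncomputable def GS1 (ε s : ℝ) : ℝ := (1 - ε) * s / (1 - ε * s)

/-- PGF of the bulk size (positive-conditioned Binomial(n,λ)). -/
noncomputable def GX (lam : ℝ) (n : ℕ) (s : ℝ) : ℝ :=
  ((1 - lam + lam * s) ^ n - (1 - lam) ^ n) / (1 - (1 - lam) ^ n)

/-- PGF of the bulk service time. -/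
noncomputable def GS (lam ε : ℝ) (n : ℕ) (s : ℝ) : ℝ := GX lam n (GS1 ε s)

/-- PGF of the number of bulks arriving during one bulk's service time. -/
noncomputable def GV (lam ε : ℝ) (n : ℕ) (s : ℝ) : ℝ := GS lam ε n (GI lam n s)

/-- Steady-state queue-size PGF (Pollaczek–Khinchine-type formula). -/
noncomputable def GLq (lam ε : ℝ) (n : ℕ) (s : ℝ) : ℝ :=
  (1 - lam * n / (1 - ε)) * (s - 1) * GV lam ε n s / (s - GV lam ε n s)

/-- Theorem 1: under the stability condition `λn < 1-ε`, the PGF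
`G_D(s) = G_L(G_I^{-1}(s))` of the steady-state delay (in frames) of the
frame-synchronous bulk-arrival queue equals the displayed closed form. -/
theorem stmt8 (lam ε : ℝ) (n : ℕ) (hn : 1 ≤ n)
    (hlam0 : 0 < lam) (hlam1 : lam < 1) (hε0 : 0 < ε) (hε1 : ε < 1)
    (hstab : lam * n < 1 - ε) :
    ∀ s ∈ Set.Ioo (0 : ℝ) 1,
      GLq lam ε n (GIinv lam n s)
        = (1 - lam * n / (1 - ε)) *
            ((1 - s) * ((1 - lam) ^ n * (1 - ε * s) ^ n - (1 - lam + (lam - ε) * s) ^ n))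
          / ((1 - (1 - lam) ^ n) * (s * (1 - ε * s) ^ n - (1 - lam + (lam - ε) * s) ^ n)) := by
  intro s hs
  obtain ⟨hs0, hs1⟩ := hs
  have hA : (1 - lam) ^ n < 1 := by
    apply pow_lt_one₀ (by linarith) (by linarith) (by omega)
  have ha : (1 : ℝ) - (1 - lam) ^ n ≠ 0 := by linarith
  have hεs : (1 : ℝ) - ε * s ≠ 0 := by nlinarith
  have hC : ((1 : ℝ) - ε * s) ^ n ≠ 0 := pow_ne_zero _ hεs
  have hGI : GI lam n (GIinv lam n s) = s := by
    simp only [GI, GIinv]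
    field_simp
    ring
  have hGS1 : GS1 ε s = (1 - ε) * s / (1 - ε * s) := rfl
  have hB : 1 - lam + lam * ((1 - ε) * s / (1 - ε * s))
      = (1 - lam + (lam - ε) * s) / (1 - ε * s) := by
    field_simp; ring
  have hGV : GV lam ε n (GIinv lam n s)
      = ((1 - lam + (lam - ε) * s) ^ n - (1 - lam) ^ n * (1 - ε * s) ^ n)
        / ((1 - (1 - lam) ^ n) * (1 - ε * s) ^ n) := by
    simp only [GV, GS, hGI, GX, hGS1, hB, div_pow]
    field_simp
  have hGIinv : GIinv lam n s = (s - (1 - lam) ^ n) / (1 - (1 - lam) ^ n) := rfl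
  by_cases hD : s * (1 - ε * s) ^ n - (1 - lam + (lam - ε) * s) ^ n = 0
  · have h1 : GIinv lam n s - GV lam ε n (GIinv lam n s) = 0 := by
      rw [hGV, hGIinv]
      rw [div_sub_div _ _ ha (mul_ne_zero ha hC), div_eq_zero_iff]
      left
      linear_combination (1 - (1 - lam) ^ n) * hD
    simp only [GLq]
    rw [sub_eq_zero] at h1
    rw [← h1, sub_self, div_zero, hD, mul_zero, div_zero]
  · have h2 : GIinv lam n s - GV lam ε n (GIinv lam n s)
        = (s * (1 - ε * s) ^ n - (1 - lam + (lam - ε) * s) ^ n)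
          / ((1 - (1 - lam) ^ n) * (1 - ε * s) ^ n) := by
      rw [hGV, hGIinv]
      rw [div_sub_div _ _ ha (mul_ne_zero ha hC)]
      rw [div_eq_div_iff (mul_ne_zero ha (mul_ne_zero ha hC)) (mul_ne_zero ha hC)]
      ring
    simp only [GLq]
    rw [h2, hGV, hGIinv]
    rw [div_eq_div_iff (div_ne_zero hD (mul_ne_zero ha hC)) (mul_ne_zero ha hD)]
    field_simp
    ring
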